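/- Let n, m, m̃, ñ be positive integers, Φ ∈ ℝ^{n×m} with rows φ_{ℓ,:}, μ ∈ ℝ^m, C ∈ ℝ^{m×m}, and for each ℓ ∈ {1,…,n} let g_ℓ : ℝ → (0,∞) be a function such that log g_ℓ is concave. Let z ∼ N(0,1), let ĩ, j̃, r̃ ∈ {1,…,m}^{m̃} have i.i.d. uniform entries, let ℓ̃ ∈ {1,…,n}^{ñ} have i.i.d. uniform entries, all mutually independent, and assume the relevant expectations exist. Then Σ_{ℓ=1}^n E_{z}[ log g_ℓ( φ_{ℓ,:}μ + z·φ_{ℓ,:}CCᵀφ_{ℓ,:}ᵀ ) ] ≥ (n/ñ) · E_{z, ℓ̃, ĩ, j̃, r̃}[ Σ_{ℓ ∈ ℓ̃} log g_ℓ( (m/m̃) φ_{ℓ,ĩ} μ_{ĩ} + (m³/m̃³) z · φ_{ℓ,j̃} C_{j̃,r̃} C_{ĩ,r̃}ᵀ φ_{ℓ,ĩ}ᵀ ) ]. -/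

import Mathlib

open Matrix BigOperators MeasureTheory ProbabilityTheory


lemma sum_fun_comp {k M : ℕ} (b : Fin k) (h : Fin M → ℝ) :
    ∑ f : Fin k → Fin M, h (f b) = (M : ℝ) ^ (k - 1) * ∑ j, h j := by
  have e1 : ∑ f : Fin k → Fin M, h (f b)
      = ∑ p : Fin M × ({ j : Fin k // j ≠ b } → Fin M), h p.1 :=
    Fintype.sum_equiv (Equiv.funSplitAt b (Fin M)) _ _ (fun f => by simp)
  rw [e1, Fintype.sum_prod_type]
  have hc : Fintype.card { j : Fin k // j ≠ b } = k - 1 := by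
    simp [Fintype.card_subtype_compl]
  simp [Finset.sum_const, Fintype.card_fun, hc, Finset.sum_mul, mul_comm]

lemma sum_fun_comp2 {k M : ℕ} (h : Fin M → ℝ) :
    ∑ f : Fin k → Fin M, ∑ a : Fin k, h (f a)
      = (k : ℝ) * (M : ℝ) ^ (k - 1) * ∑ j, h j := by
  rw [Finset.sum_comm]
  have : ∀ a : Fin k, ∑ f : Fin k → Fin M, h (f a) = (M : ℝ) ^ (k - 1) * ∑ j, h j :=
    fun a => sum_fun_comp a h
  simp only [this, Finset.sum_const, Finset.card_univ, Fintype.card_fin, nsmul_eq_mul]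
  ring

lemma sum_fun_comp3 {k M : ℕ} (b b' c : Fin k) (h : Fin M → Fin M → Fin M → ℝ) :
    ∑ ii : Fin k → Fin M, ∑ jj : Fin k → Fin M, ∑ rr : Fin k → Fin M,
      h (ii b) (jj b') (rr c)
    = ((M : ℝ) ^ (k - 1)) ^ 3 * ∑ x, ∑ y, ∑ w, h x y w := by
  calc ∑ ii : Fin k → Fin M, ∑ jj : Fin k → Fin M, ∑ rr : Fin k → Fin M,
        h (ii b) (jj b') (rr c)
      = (M : ℝ) ^ (k - 1) * ∑ x, ∑ jj : Fin k → Fin M, ∑ rr : Fin k → Fin M,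
          h x (jj b') (rr c) :=
        sum_fun_comp b (fun x => ∑ jj : Fin k → Fin M, ∑ rr : Fin k → Fin M, h x (jj b') (rr c))
    _ = (M : ℝ) ^ (k - 1) * ∑ x, ((M : ℝ) ^ (k - 1) * ∑ y, ∑ rr : Fin k → Fin M, h x y (rr c)) := by
        congr 1
        exact Finset.sum_congr rfl fun x _ =>
          sum_fun_comp b' (fun y => ∑ rr : Fin k → Fin M, h x y (rr c))
    _ = (M : ℝ) ^ (k - 1) * ∑ x, ((M : ℝ) ^ (k - 1) * ∑ y, ((M : ℝ) ^ (k - 1) * ∑ w, h x y w)) := by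
        congr 1
        refine Finset.sum_congr rfl fun x _ => ?_
        congr 1
        exact Finset.sum_congr rfl fun y _ => sum_fun_comp c (fun w => h x y w)
    _ = ((M : ℝ) ^ (k - 1)) ^ 3 * ∑ x, ∑ y, ∑ w, h x y w := by
        simp_rw [← Finset.mul_sum]; ring

lemma sum_fun_comp3' {k M : ℕ} (T : Fin M → Fin M → Fin M → ℝ) :
    ∑ ii : Fin k → Fin M, ∑ jj : Fin k → Fin M, ∑ rr : Fin k → Fin M,
      ∑ b : Fin k, ∑ b' : Fin k, ∑ c : Fin k, T (jj b) (ii b') (rr c)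
    = (k : ℝ) ^ 3 * ((M : ℝ) ^ (k - 1)) ^ 3 * ∑ x, ∑ y, ∑ w, T x y w := by
  have e1 : ∑ q : (Fin k → Fin M) × (Fin k → Fin M) × (Fin k → Fin M),
        ∑ s : Fin k × Fin k × Fin k, T (q.2.1 s.1) (q.1 s.2.1) (q.2.2 s.2.2)
      = ∑ ii : Fin k → Fin M, ∑ jj : Fin k → Fin M, ∑ rr : Fin k → Fin M,
          ∑ b : Fin k, ∑ b' : Fin k, ∑ c : Fin k, T (jj b) (ii b') (rr c) := by
    simp_rw [Fintype.sum_prod_type]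
  rw [← e1, Finset.sum_comm]
  simp_rw [Fintype.sum_prod_type]
  have e2 : ∀ b b' c : Fin k,
      ∑ ii : Fin k → Fin M, ∑ jj : Fin k → Fin M, ∑ rr : Fin k → Fin M,
        T (jj b) (ii b') (rr c)
      = ((M : ℝ) ^ (k - 1)) ^ 3 * ∑ x, ∑ y, ∑ w, T x y w := by
    intro b b' c
    refine (sum_fun_comp3 b' b c (fun y x w => T x y w)).trans ?_
    congr 1
    exact Finset.sum_comm
  simp only [e2, Finset.sum_const, Finset.card_univ, Fintype.card_fin, nsmul_eq_mul]
  ring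


lemma sum_swap31 {α β : Type*} [Fintype α] [Fintype β] (S : α → α → α → β → ℝ) :
    ∑ i : α, ∑ j : α, ∑ r : α, ∑ l : β, S i j r l
      = ∑ l : β, ∑ i : α, ∑ j : α, ∑ r : α, S i j r l := by
  have e : ∑ q : α × α × α, ∑ l : β, S q.1 q.2.1 q.2.2 l
      = ∑ i : α, ∑ j : α, ∑ r : α, ∑ l : β, S i j r l := by
    simp_rw [Fintype.sum_prod_type]
  rw [← e, Finset.sum_comm]
  simp_rw [Fintype.sum_prod_type]

lemma mul_sum3 {α : Type*} [Fintype α] (c : ℝ) (S : α → α → α → ℝ) :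
    ∑ i : α, ∑ j : α, ∑ r : α, c * S i j r = c * ∑ i : α, ∑ j : α, ∑ r : α, S i j r := by
  simp_rw [Finset.mul_sum]

lemma key_avg {n m m' : ℕ} (hm : 0 < m) (hm' : 0 < m')
    (Φ : Matrix (Fin n) (Fin m) ℝ) (μ : Fin m → ℝ) (C : Matrix (Fin m) (Fin m) ℝ)
    (ℓ : Fin n) (z : ℝ) :
    ∑ ii : Fin m' → Fin m, ∑ jj : Fin m' → Fin m, ∑ rr : Fin m' → Fin m,
      (((m : ℝ) / m') * ((fun b => Φ ℓ (ii b)) ⬝ᵥ (μ ∘ ii))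
        + ((m : ℝ) ^ 3 / (m' : ℝ) ^ 3) * z *
          ((fun b => Φ ℓ (jj b)) ⬝ᵥ (C.submatrix jj rr * (C.submatrix ii rr)ᵀ) *ᵥ
            (fun b => Φ ℓ (ii b))))
    = ((m : ℝ) ^ m') ^ 3 *
        ((fun k => Φ ℓ k) ⬝ᵥ μ
          + z * ((fun k => Φ ℓ k) ⬝ᵥ (C * Cᵀ) *ᵥ (fun k => Φ ℓ k))) := by
  have hmR : (m : ℝ) * (m : ℝ) ^ (m' - 1) = (m : ℝ) ^ m' := by
    rw [← pow_succ', Nat.sub_add_cancel hm']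
  have hm'R : (m' : ℝ) ≠ 0 := Nat.cast_ne_zero.mpr hm'.ne'
  have hinner1 : ∀ ii : Fin m' → Fin m,
      ((fun b => Φ ℓ (ii b)) ⬝ᵥ (μ ∘ ii)) = ∑ b, (fun j => Φ ℓ j * μ j) (ii b) := by
    intro ii; simp [dotProduct]
  have hinner : ∀ ii jj rr : Fin m' → Fin m,
      ((fun b => Φ ℓ (jj b)) ⬝ᵥ (C.submatrix jj rr * (C.submatrix ii rr)ᵀ) *ᵥ
          (fun b => Φ ℓ (ii b)))
      = ∑ b : Fin m', ∑ b' : Fin m', ∑ c : Fin m',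
          (fun x y w => Φ ℓ x * (C x w * C y w * Φ ℓ y)) (jj b) (ii b') (rr c) := by
    intro ii jj rr
    simp only [dotProduct, mulVec, Matrix.mul_apply, Matrix.submatrix_apply,
      Matrix.transpose_apply, Finset.mul_sum, Finset.sum_mul]
  have hB : ((fun k => Φ ℓ k) ⬝ᵥ (C * Cᵀ) *ᵥ (fun k => Φ ℓ k))
      = ∑ x : Fin m, ∑ y : Fin m, ∑ w : Fin m, Φ ℓ x * (C x w * C y w * Φ ℓ y) := by
    simp only [dotProduct, mulVec, Matrix.mul_apply, Matrix.transpose_apply,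
      Finset.mul_sum, Finset.sum_mul]
  have part1 : ∑ ii : Fin m' → Fin m, ∑ jj : Fin m' → Fin m, ∑ rr : Fin m' → Fin m,
        ((m : ℝ) / m') * ((fun b => Φ ℓ (ii b)) ⬝ᵥ (μ ∘ ii))
      = ((m : ℝ) ^ m') ^ 3 * ((fun k => Φ ℓ k) ⬝ᵥ μ) := by
    calc ∑ ii : Fin m' → Fin m, ∑ jj : Fin m' → Fin m, ∑ rr : Fin m' → Fin m,
          ((m : ℝ) / m') * ((fun b => Φ ℓ (ii b)) ⬝ᵥ (μ ∘ ii))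
        = ∑ ii : Fin m' → Fin m, ((m : ℝ) ^ m') ^ 2 *
            (((m : ℝ) / m') * ∑ b, (fun j => Φ ℓ j * μ j) (ii b)) := by
          refine Finset.sum_congr rfl fun ii _ => ?_
          rw [hinner1 ii]
          simp [Finset.sum_const, Fintype.card_fun]
          ring
      _ = ((m : ℝ) ^ m') ^ 2 * (((m : ℝ) / m') *
            ∑ ii : Fin m' → Fin m, ∑ b, (fun j => Φ ℓ j * μ j) (ii b)) := by
          rw [← Finset.mul_sum]
          congr 1
          rw [← Finset.mul_sum]
      _ = ((m : ℝ) ^ m') ^ 3 * ((fun k => Φ ℓ k) ⬝ᵥ μ) := by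
          rw [sum_fun_comp2 (fun j => Φ ℓ j * μ j)]
          simp only [dotProduct]
          rw [show ((m : ℝ) ^ m') ^ 3 = ((m : ℝ) ^ m') ^ 2 * ((m:ℝ) * (m:ℝ) ^ (m' - 1))
            from by rw [hmR]; ring]
          field_simp
  have part2 : ∑ ii : Fin m' → Fin m, ∑ jj : Fin m' → Fin m, ∑ rr : Fin m' → Fin m,
        (((m : ℝ) ^ 3 / (m' : ℝ) ^ 3) * z *
          ((fun b => Φ ℓ (jj b)) ⬝ᵥ (C.submatrix jj rr * (C.submatrix ii rr)ᵀ) *ᵥ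
            (fun b => Φ ℓ (ii b))))
      = ((m : ℝ) ^ m') ^ 3 *
          (z * ((fun k => Φ ℓ k) ⬝ᵥ (C * Cᵀ) *ᵥ (fun k => Φ ℓ k))) := by
    have step1 : ∑ ii : Fin m' → Fin m, ∑ jj : Fin m' → Fin m, ∑ rr : Fin m' → Fin m,
          (((m : ℝ) ^ 3 / (m' : ℝ) ^ 3) * z *
            ((fun b => Φ ℓ (jj b)) ⬝ᵥ (C.submatrix jj rr * (C.submatrix ii rr)ᵀ) *ᵥ
              (fun b => Φ ℓ (ii b))))
        = ((m : ℝ) ^ 3 / (m' : ℝ) ^ 3) * z *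
            ∑ ii : Fin m' → Fin m, ∑ jj : Fin m' → Fin m, ∑ rr : Fin m' → Fin m,
              ∑ b : Fin m', ∑ b' : Fin m', ∑ c : Fin m',
                Φ ℓ (jj b) * (C (jj b) (rr c) * C (ii b') (rr c) * Φ ℓ (ii b')) := by
      simp_rw [hinner]
      exact mul_sum3 _ _
    rw [step1]
    have step2 := sum_fun_comp3' (fun x y w => Φ ℓ x * (C x w * C y w * Φ ℓ y))
      (k := m') (M := m)
    rw [step2, hB,
      show ((m : ℝ) ^ m') ^ 3 = ((m:ℝ) * (m:ℝ) ^ (m' - 1)) ^ 3 from by rw [hmR]]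
    field_simp
  calc ∑ ii : Fin m' → Fin m, ∑ jj : Fin m' → Fin m, ∑ rr : Fin m' → Fin m,
        (((m : ℝ) / m') * ((fun b => Φ ℓ (ii b)) ⬝ᵥ (μ ∘ ii))
          + ((m : ℝ) ^ 3 / (m' : ℝ) ^ 3) * z *
            ((fun b => Φ ℓ (jj b)) ⬝ᵥ (C.submatrix jj rr * (C.submatrix ii rr)ᵀ) *ᵥ
              (fun b => Φ ℓ (ii b))))
      = (∑ ii : Fin m' → Fin m, ∑ jj : Fin m' → Fin m, ∑ rr : Fin m' → Fin m,
          ((m : ℝ) / m') * ((fun b => Φ ℓ (ii b)) ⬝ᵥ (μ ∘ ii)))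
        + ∑ ii : Fin m' → Fin m, ∑ jj : Fin m' → Fin m, ∑ rr : Fin m' → Fin m,
            (((m : ℝ) ^ 3 / (m' : ℝ) ^ 3) * z *
              ((fun b => Φ ℓ (jj b)) ⬝ᵥ (C.submatrix jj rr * (C.submatrix ii rr)ᵀ) *ᵥ
                (fun b => Φ ℓ (ii b)))) := by
        simp_rw [Finset.sum_add_distrib]
    _ = ((m : ℝ) ^ m') ^ 3 *
          ((fun k => Φ ℓ k) ⬝ᵥ μ
            + z * ((fun k => Φ ℓ k) ⬝ᵥ (C * Cᵀ) *ᵥ (fun k => Φ ℓ k))) := by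
        rw [part1, part2]; ring

/-- Theorem 3 of the paper: for log-concave site projections `g_ℓ`, the
quadruply stochastic estimator lower-bounds the expected log-likelihood term of the ELBO:
`Σ_ℓ E_z[log g_ℓ(φ_ℓμ + z φ_ℓ CCᵀ φ_ℓᵀ)] ≥ (n/ñ) E[Σ_{ℓ∈ℓ̃} log g_ℓ((m/m̃)φ_{ℓ,ĩ}μ_ĩ +
(m³/m̃³) z φ_{ℓ,j̃} C_{j̃,r̃} C_{ĩ,r̃}ᵀ φ_{ℓ,ĩ}ᵀ)]`.  Here `m'` plays the role of `m̃` and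
`n'` of `ñ`; `z ∼ N(0,1)`, and the expectation over the mutually independent i.i.d. uniform
index vectors is the uniform average over all index functions. -/
theorem elbo_lower_bound_estimator
    (n m m' n' : ℕ) (hn : 0 < n) (hm : 0 < m) (hm' : 0 < m') (hn' : 0 < n')
    (Φ : Matrix (Fin n) (Fin m) ℝ) (μ : Fin m → ℝ) (C : Matrix (Fin m) (Fin m) ℝ)
    (g : Fin n → ℝ → ℝ)
    (hgpos : ∀ (ℓ : Fin n) (x : ℝ), 0 < g ℓ x)
    (hgconc : ∀ ℓ : Fin n, ConcaveOn ℝ Set.univ (fun x => Real.log (g ℓ x)))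
    (hInt1 : ∀ ℓ : Fin n,
      Integrable (fun z : ℝ =>
        Real.log (g ℓ ((fun k => Φ ℓ k) ⬝ᵥ μ
          + z * ((fun k => Φ ℓ k) ⬝ᵥ (C * Cᵀ) *ᵥ (fun k => Φ ℓ k)))))
        (gaussianReal 0 1))
    (hInt2 : ∀ (ii jj rr : Fin m' → Fin m) (ℓ : Fin n),
      Integrable (fun z : ℝ =>
        Real.log (g ℓ
          (((m : ℝ) / m') * ((fun b => Φ ℓ (ii b)) ⬝ᵥ (μ ∘ ii))
            + ((m : ℝ) ^ 3 / (m' : ℝ) ^ 3) * z *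
              ((fun b => Φ ℓ (jj b)) ⬝ᵥ
                (C.submatrix jj rr * (C.submatrix ii rr)ᵀ) *ᵥ (fun b => Φ ℓ (ii b))))))
        (gaussianReal 0 1)) :
    (∑ ℓ : Fin n, ∫ z : ℝ,
        Real.log (g ℓ ((fun k => Φ ℓ k) ⬝ᵥ μ
          + z * ((fun k => Φ ℓ k) ⬝ᵥ (C * Cᵀ) *ᵥ (fun k => Φ ℓ k))))
        ∂(gaussianReal 0 1))
    ≥ ((n : ℝ) / n') *
      ∫ z : ℝ,
        (∑ ii : Fin m' → Fin m, ∑ jj : Fin m' → Fin m, ∑ rr : Fin m' → Fin m,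
          ∑ ll : Fin n' → Fin n, ∑ a : Fin n',
            Real.log (g (ll a)
              (((m : ℝ) / m') * ((fun b => Φ (ll a) (ii b)) ⬝ᵥ (μ ∘ ii))
                + ((m : ℝ) ^ 3 / (m' : ℝ) ^ 3) * z *
                  ((fun b => Φ (ll a) (jj b)) ⬝ᵥ
                    (C.submatrix jj rr * (C.submatrix ii rr)ᵀ) *ᵥ
                      (fun b => Φ (ll a) (ii b))))))
          / ((Fintype.card (Fin m' → Fin m) : ℝ) * (Fintype.card (Fin m' → Fin m)) *
              (Fintype.card (Fin m' → Fin m)) * (Fintype.card (Fin n' → Fin n)))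
        ∂(gaussianReal 0 1) := by
  rw [ge_iff_le]
  set ν := gaussianReal 0 1
  -- abbreviations as plain functions
  set F : Fin n → ℝ → ℝ := fun ℓ z =>
    Real.log (g ℓ ((fun k => Φ ℓ k) ⬝ᵥ μ
      + z * ((fun k => Φ ℓ k) ⬝ᵥ (C * Cᵀ) *ᵥ (fun k => Φ ℓ k)))) with hF
  set P : (Fin m' → Fin m) → (Fin m' → Fin m) → (Fin m' → Fin m) → Fin n → ℝ → ℝ :=
    fun ii jj rr ℓ z =>
      ((m : ℝ) / m') * ((fun b => Φ ℓ (ii b)) ⬝ᵥ (μ ∘ ii))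
        + ((m : ℝ) ^ 3 / (m' : ℝ) ^ 3) * z *
          ((fun b => Φ ℓ (jj b)) ⬝ᵥ
            (C.submatrix jj rr * (C.submatrix ii rr)ᵀ) *ᵥ (fun b => Φ ℓ (ii b))) with hP
  have hN3pos : (0:ℝ) < ((m:ℝ)^m')^3 := by positivity
  -- Jensen, summed over the triple of index maps
  have jensen : ∀ (z : ℝ) (ℓ : Fin n),
      ∑ ii : Fin m' → Fin m, ∑ jj : Fin m' → Fin m, ∑ rr : Fin m' → Fin m,
        Real.log (g ℓ (P ii jj rr ℓ z))
      ≤ ((m:ℝ)^m')^3 * F ℓ z := by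
    intro z ℓ
    have hJ := (hgconc ℓ).le_map_sum (t := Finset.univ)
      (w := fun _ : (Fin m' → Fin m) × (Fin m' → Fin m) × (Fin m' → Fin m) =>
        (((m:ℝ)^m')^3)⁻¹)
      (p := fun q => P q.1 q.2.1 q.2.2 ℓ z)
      (fun i _ => by positivity)
      (by
        simp only [Finset.sum_const, Finset.card_univ, Fintype.card_prod, Fintype.card_fun,
          Fintype.card_fin, nsmul_eq_mul]
        push_cast
        field_simp)
      (fun i _ => Set.mem_univ _)
    have hsum : ∑ q : (Fin m' → Fin m) × (Fin m' → Fin m) × (Fin m' → Fin m),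
          (((m:ℝ)^m')^3)⁻¹ • P q.1 q.2.1 q.2.2 ℓ z
        = (fun k => Φ ℓ k) ⬝ᵥ μ
            + z * ((fun k => Φ ℓ k) ⬝ᵥ (C * Cᵀ) *ᵥ (fun k => Φ ℓ k)) := by
      simp only [smul_eq_mul]
      rw [← Finset.mul_sum]
      have : ∑ q : (Fin m' → Fin m) × (Fin m' → Fin m) × (Fin m' → Fin m),
            P q.1 q.2.1 q.2.2 ℓ z
          = ∑ ii : Fin m' → Fin m, ∑ jj : Fin m' → Fin m, ∑ rr : Fin m' → Fin m,
              P ii jj rr ℓ z := by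
        simp_rw [Fintype.sum_prod_type]
      rw [this, hP]
      rw [key_avg hm hm' Φ μ C ℓ z]
      rw [inv_mul_cancel_left₀ hN3pos.ne']
    rw [hsum] at hJ
    have hJ' : ∑ q : (Fin m' → Fin m) × (Fin m' → Fin m) × (Fin m' → Fin m),
          (((m:ℝ)^m')^3)⁻¹ • Real.log (g ℓ (P q.1 q.2.1 q.2.2 ℓ z)) ≤ F ℓ z := hJ
    have hflat : ∑ q : (Fin m' → Fin m) × (Fin m' → Fin m) × (Fin m' → Fin m),
          (((m:ℝ)^m')^3)⁻¹ • Real.log (g ℓ (P q.1 q.2.1 q.2.2 ℓ z))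
        = (((m:ℝ)^m')^3)⁻¹ * ∑ ii : Fin m' → Fin m, ∑ jj : Fin m' → Fin m,
            ∑ rr : Fin m' → Fin m, Real.log (g ℓ (P ii jj rr ℓ z)) := by
      simp only [smul_eq_mul]
      rw [← Finset.mul_sum]
      congr 1
      simp_rw [Fintype.sum_prod_type]
    rw [hflat] at hJ'
    calc ∑ ii : Fin m' → Fin m, ∑ jj : Fin m' → Fin m, ∑ rr : Fin m' → Fin m,
          Real.log (g ℓ (P ii jj rr ℓ z))
        = ((m:ℝ)^m')^3 * ((((m:ℝ)^m')^3)⁻¹ *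
            ∑ ii : Fin m' → Fin m, ∑ jj : Fin m' → Fin m, ∑ rr : Fin m' → Fin m,
              Real.log (g ℓ (P ii jj rr ℓ z))) := by
          rw [mul_inv_cancel_left₀ hN3pos.ne']
      _ ≤ ((m:ℝ)^m')^3 * F ℓ z := by
          exact mul_le_mul_of_nonneg_left hJ' hN3pos.le
  -- collapse the ℓ̃ average and bound pointwise
  have hnR : (n:ℝ)^n' = (n:ℝ) * (n:ℝ)^(n'-1) := by
    rw [← pow_succ', Nat.sub_add_cancel hn']
  have hDpos : (0:ℝ) < ((m:ℝ)^m')^3 * (n:ℝ)^n' := by positivity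
  have key : ∀ z : ℝ,
      (∑ ii : Fin m' → Fin m, ∑ jj : Fin m' → Fin m, ∑ rr : Fin m' → Fin m,
        ∑ ll : Fin n' → Fin n, ∑ a : Fin n',
          Real.log (g (ll a) (P ii jj rr (ll a) z)))
        / (((m:ℝ)^m')^3 * (n:ℝ)^n')
      ≤ ((n':ℝ)/n) * ∑ ℓ, F ℓ z := by
    intro z
    have hll : ∀ ii jj rr : Fin m' → Fin m,
        ∑ ll : Fin n' → Fin n, ∑ a : Fin n',
          Real.log (g (ll a) (P ii jj rr (ll a) z))
        = (n':ℝ) * (n:ℝ)^(n'-1) * ∑ ℓ, Real.log (g ℓ (P ii jj rr ℓ z)) :=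
      fun ii jj rr => sum_fun_comp2 (fun ℓ => Real.log (g ℓ (P ii jj rr ℓ z)))
    have hnum : ∑ ii : Fin m' → Fin m, ∑ jj : Fin m' → Fin m, ∑ rr : Fin m' → Fin m,
          ∑ ll : Fin n' → Fin n, ∑ a : Fin n',
            Real.log (g (ll a) (P ii jj rr (ll a) z))
        = ((n':ℝ) * (n:ℝ)^(n'-1)) *
            ∑ ℓ, ∑ ii : Fin m' → Fin m, ∑ jj : Fin m' → Fin m, ∑ rr : Fin m' → Fin m,
              Real.log (g ℓ (P ii jj rr ℓ z)) := by
      simp_rw [hll]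
      rw [mul_sum3 ((n':ℝ) * (n:ℝ)^(n'-1))
        (fun ii jj rr => ∑ ℓ, Real.log (g ℓ (P ii jj rr ℓ z)))]
      rw [sum_swap31 (fun ii jj rr ℓ => Real.log (g ℓ (P ii jj rr ℓ z)))]
    have hbound : ∑ ℓ, ∑ ii : Fin m' → Fin m, ∑ jj : Fin m' → Fin m,
          ∑ rr : Fin m' → Fin m, Real.log (g ℓ (P ii jj rr ℓ z))
        ≤ ∑ ℓ, ((m:ℝ)^m')^3 * F ℓ z :=
      Finset.sum_le_sum (fun ℓ _ => jensen z ℓ)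
    rw [hnum, div_le_iff₀ hDpos]
    calc ((n':ℝ) * (n:ℝ)^(n'-1)) *
            ∑ ℓ, ∑ ii : Fin m' → Fin m, ∑ jj : Fin m' → Fin m, ∑ rr : Fin m' → Fin m,
              Real.log (g ℓ (P ii jj rr ℓ z))
        ≤ ((n':ℝ) * (n:ℝ)^(n'-1)) * ∑ ℓ, ((m:ℝ)^m')^3 * F ℓ z :=
          mul_le_mul_of_nonneg_left hbound (by positivity)
      _ = ((n':ℝ)/n * ∑ ℓ, F ℓ z) * (((m:ℝ)^m')^3 * (n:ℝ)^n') := by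
          rw [← Finset.mul_sum, hnR]
          have hn0 : (n:ℝ) ≠ 0 := Nat.cast_ne_zero.mpr hn.ne'
          field_simp
  -- integrability of both integrands
  have IntR : Integrable (fun z : ℝ =>
      (∑ ii : Fin m' → Fin m, ∑ jj : Fin m' → Fin m, ∑ rr : Fin m' → Fin m,
        ∑ ll : Fin n' → Fin n, ∑ a : Fin n',
          Real.log (g (ll a) (P ii jj rr (ll a) z)))
        / ((Fintype.card (Fin m' → Fin m) : ℝ) * (Fintype.card (Fin m' → Fin m)) *
            (Fintype.card (Fin m' → Fin m)) * (Fintype.card (Fin n' → Fin n)))) ν := by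
    apply Integrable.div_const
    refine integrable_finset_sum _ (fun ii _ => ?_)
    refine integrable_finset_sum _ (fun jj _ => ?_)
    refine integrable_finset_sum _ (fun rr _ => ?_)
    refine integrable_finset_sum _ (fun ll _ => ?_)
    refine integrable_finset_sum _ (fun a _ => ?_)
    exact hInt2 ii jj rr (ll a)
  have IntL : Integrable (fun z : ℝ => ((n':ℝ)/n) * ∑ ℓ, F ℓ z) ν := by
    refine Integrable.const_mul ?_ _
    exact integrable_finset_sum _ (fun ℓ _ => hInt1 ℓ)
  have hDval : ((Fintype.card (Fin m' → Fin m) : ℝ) * (Fintype.card (Fin m' → Fin m)) *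
        (Fintype.card (Fin m' → Fin m)) * (Fintype.card (Fin n' → Fin n)))
      = ((m:ℝ)^m')^3 * (n:ℝ)^n' := by
    have h1 : (Fintype.card (Fin m' → Fin m)) = m ^ m' := by
      simp [Fintype.card_fun]
    have h2 : (Fintype.card (Fin n' → Fin n)) = n ^ n' := by
      simp [Fintype.card_fun]
    rw [h1, h2]
    push_cast
    ring
  have main_ineq : (∫ z : ℝ,
        (∑ ii : Fin m' → Fin m, ∑ jj : Fin m' → Fin m, ∑ rr : Fin m' → Fin m,
          ∑ ll : Fin n' → Fin n, ∑ a : Fin n',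
            Real.log (g (ll a) (P ii jj rr (ll a) z)))
          / ((Fintype.card (Fin m' → Fin m) : ℝ) * (Fintype.card (Fin m' → Fin m)) *
              (Fintype.card (Fin m' → Fin m)) * (Fintype.card (Fin n' → Fin n))) ∂ν)
      ≤ ∫ z : ℝ, ((n':ℝ)/n) * ∑ ℓ, F ℓ z ∂ν := by
    refine integral_mono IntR IntL ?_
    intro z
    rw [hDval]
    exact key z
  have hnn0 : (n:ℝ) ≠ 0 := Nat.cast_ne_zero.mpr hn.ne'
  have hnn0' : (n':ℝ) ≠ 0 := Nat.cast_ne_zero.mpr hn'.ne'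
  calc ((n : ℝ) / n') *
      ∫ z : ℝ,
        (∑ ii : Fin m' → Fin m, ∑ jj : Fin m' → Fin m, ∑ rr : Fin m' → Fin m,
          ∑ ll : Fin n' → Fin n, ∑ a : Fin n',
            Real.log (g (ll a) (P ii jj rr (ll a) z)))
          / ((Fintype.card (Fin m' → Fin m) : ℝ) * (Fintype.card (Fin m' → Fin m)) *
              (Fintype.card (Fin m' → Fin m)) * (Fintype.card (Fin n' → Fin n))) ∂ν
      ≤ ((n : ℝ) / n') * ∫ z : ℝ, ((n':ℝ)/n) * ∑ ℓ, F ℓ z ∂ν :=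
        mul_le_mul_of_nonneg_left main_ineq (by positivity)
    _ = ∫ z : ℝ, ∑ ℓ, F ℓ z ∂ν := by
        rw [integral_const_mul, ← mul_assoc,
          show ((n:ℝ)/n') * ((n':ℝ)/n) = 1 from by field_simp, one_mul]
    _ = ∑ ℓ, ∫ z : ℝ, F ℓ z ∂ν :=
        integral_finset_sum _ (fun ℓ _ => hInt1 ℓ)
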